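/- If a set of probability measures Q on a finite space Ω is consistent with respect to a filtration (F_t), i.e. inf_{Q∈Q} E_Q[X | F_t] = inf_{Q∈Q} E_Q[ inf_{M∈Q} E_M[X | F_{t+1}] | F_t ] for every t ∈ {0,...,T-1} and every random variable X, then the constant sequence Q_t = Q is dynamically consistent: for every t, A ∈ F_t, and random variable X, 1_A · min_{ω∈A} ( inf_{Q∈Q} E_Q[X|F_{t+1}](ω) ) ≤ 1_A · inf_{Q∈Q} E_Q[X|F_t] ≤ 1_A · max_{ω∈A} ( inf_{Q∈Q} E_Q[X|F_{t+1}](ω) ). -/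
import Mathlib


open MeasureTheory
open scoped BigOperators ENNReal

/-- A probability mass function on the finite set `Ω`. -/
def IsProb {Ω : Type*} [Fintype Ω] (Q : Ω → ℝ) : Prop :=
  (∀ ω, 0 ≤ Q ω) ∧ ∑ ω, Q ω = 1

/-- Full support (equivalence with a full-support reference measure). -/
def FullSupport {Ω : Type*} (Q : Ω → ℝ) : Prop := ∀ ω, 0 < Q ω

/-- The atom of the σ-algebra `𝒢` containing `ω`. -/
def atomOf {Ω : Type*} (𝒢 : MeasurableSpace Ω) (ω : Ω) : Set Ω :=
  ⋂₀ {A : Set Ω | MeasurableSet[𝒢] A ∧ ω ∈ A}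

/-- Conditional expectation of `X` under `Q` given the σ-algebra `𝒢`, computed
pointwise on atoms (finite state space). -/
noncomputable def condExpOn {Ω : Type*} [Fintype Ω] (Q : Ω → ℝ)
    (𝒢 : MeasurableSpace Ω) (X : Ω → ℝ) (ω : Ω) : ℝ :=
  (∑ ω', (atomOf 𝒢 ω).indicator (fun u => Q u * X u) ω') /
    (∑ ω', (atomOf 𝒢 ω).indicator Q ω')

/-- `inf_{Q ∈ 𝒬} E_Q[X | 𝒢]`, pointwise in `ω`. -/
noncomputable def infCE {Ω : Type*} [Fintype Ω] (𝒬 : Set (Ω → ℝ))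
    (𝒢 : MeasurableSpace Ω) (X : Ω → ℝ) (ω : Ω) : ℝ :=
  sInf ((fun Q => condExpOn Q 𝒢 X ω) '' 𝒬)

/-- A set of probability measures is consistent w.r.t. the filtration `F`. -/
def IsConsistent {Ω : Type*} [Fintype Ω] (T : ℕ) (F : ℕ → MeasurableSpace Ω)
    (𝒬 : Set (Ω → ℝ)) : Prop :=
  ∀ t, t < T → ∀ X : Ω → ℝ, ∀ ω : Ω,
    infCE 𝒬 (F t) X ω = infCE 𝒬 (F t) (infCE 𝒬 (F (t + 1)) X) ω

/-- A sequence of sets of probability measures is dynamically consistent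
w.r.t. the filtration `F`. -/
def DynConsistent {Ω : Type*} [Fintype Ω] (T : ℕ) (F : ℕ → MeasurableSpace Ω)
    (𝒬 : ℕ → Set (Ω → ℝ)) : Prop :=
  ∀ t, t < T → ∀ A : Set Ω, MeasurableSet[F t] A → A.Nonempty →
    ∀ X : Ω → ℝ, ∀ ω ∈ A,
      (⨅ ω' : A, infCE (𝒬 (t + 1)) (F (t + 1)) X (ω' : Ω)) ≤ infCE (𝒬 t) (F t) X ω ∧
      infCE (𝒬 t) (F t) X ω ≤ ⨆ ω' : A, infCE (𝒬 (t + 1)) (F (t + 1)) X (ω' : Ω)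

/-- The set `P^e` of all full-support probability measures on `Ω`. -/
def fullSupportProbs (Ω : Type*) [Fintype Ω] : Set (Ω → ℝ) :=
  {Q | IsProb Q ∧ FullSupport Q}

section Aux
variable {Ω : Type*}

lemma mem_atomOf' (𝒢 : MeasurableSpace Ω) (ω : Ω) : ω ∈ atomOf 𝒢 ω :=
  Set.mem_sInter.mpr fun _ hA => hA.2

lemma atomOf_subset' {𝒢 : MeasurableSpace Ω} {A : Set Ω} (hA : MeasurableSet[𝒢] A)
    {ω : Ω} (hω : ω ∈ A) : atomOf 𝒢 ω ⊆ A :=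
  Set.sInter_subset_of_mem ⟨hA, hω⟩

lemma atomOf_mono' {𝒢 ℋ : MeasurableSpace Ω} (h : 𝒢 ≤ ℋ) (ω : Ω) :
    atomOf ℋ ω ⊆ atomOf 𝒢 ω := by
  intro x hx
  refine Set.mem_sInter.mpr fun B hB => ?_
  exact Set.mem_sInter.mp hx B ⟨h B hB.1, hB.2⟩

lemma atomOf_subset_of_mem' {𝒢 : MeasurableSpace Ω} {ω ω' : Ω}
    (h : ω' ∈ atomOf 𝒢 ω) : atomOf 𝒢 ω' ⊆ atomOf 𝒢 ω := by
  intro x hx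
  refine Set.mem_sInter.mpr fun B hB => ?_
  have hω'B : ω' ∈ B := atomOf_subset' hB.1 hB.2 h
  exact Set.mem_sInter.mp hx B ⟨hB.1, hω'B⟩

variable [Fintype Ω]

lemma condExpOn_eq_zero' {Q : Ω → ℝ} {𝒢 : MeasurableSpace Ω} {X : Ω → ℝ} {ω : Ω}
    (h : ∑ ω', (atomOf 𝒢 ω).indicator Q ω' = 0) : condExpOn Q 𝒢 X ω = 0 := by
  rw [condExpOn, h, div_zero]

lemma mass_nonneg' {Q : Ω → ℝ} (hQ : ∀ u, 0 ≤ Q u) (𝒢 : MeasurableSpace Ω) (ω : Ω) :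
    0 ≤ ∑ ω', (atomOf 𝒢 ω).indicator Q ω' :=
  Finset.sum_nonneg fun u _ => Set.indicator_nonneg (fun x _ => hQ x) u

lemma mass_zero_of_subset' {Q : Ω → ℝ} (hQ : ∀ u, 0 ≤ Q u)
    {𝒢 ℋ : MeasurableSpace Ω} {ω ω' : Ω} (hsub : atomOf ℋ ω' ⊆ atomOf 𝒢 ω)
    (h : ∑ u, (atomOf 𝒢 ω).indicator Q u = 0) :
    ∑ u, (atomOf ℋ ω').indicator Q u = 0 := by
  have hzero : ∀ u ∈ atomOf 𝒢 ω, Q u = 0 := by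
    have h0 := (Finset.sum_eq_zero_iff_of_nonneg
      (fun u _ => Set.indicator_nonneg (fun x _ => hQ x) u)).mp h
    intro u hu
    have := h0 u (Finset.mem_univ u)
    rwa [Set.indicator_of_mem hu] at this
  refine Finset.sum_eq_zero fun u _ => ?_
  by_cases hu : u ∈ atomOf ℋ ω'
  · rw [Set.indicator_of_mem hu]; exact hzero u (hsub hu)
  · exact Set.indicator_of_notMem hu _

lemma condExpOn_le_of_le' {Q : Ω → ℝ} (hQ : ∀ u, 0 ≤ Q u)
    {𝒢 : MeasurableSpace Ω} {Y : Ω → ℝ} {ω : Ω} {A : Set Ω}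
    (hsub : atomOf 𝒢 ω ⊆ A) {M : ℝ} (hM : ∀ u ∈ A, Y u ≤ M)
    (hD : 0 < ∑ ω', (atomOf 𝒢 ω).indicator Q ω') :
    condExpOn Q 𝒢 Y ω ≤ M := by
  rw [condExpOn, div_le_iff₀ hD, mul_comm, Finset.sum_mul]
  refine Finset.sum_le_sum fun u _ => ?_
  by_cases hu : u ∈ atomOf 𝒢 ω
  · rw [Set.indicator_of_mem hu, Set.indicator_of_mem hu]
    exact mul_le_mul_of_nonneg_left (hM u (hsub hu)) (hQ u)
  · rw [Set.indicator_of_notMem hu, Set.indicator_of_notMem hu, zero_mul]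

lemma le_condExpOn_of_le' {Q : Ω → ℝ} (hQ : ∀ u, 0 ≤ Q u)
    {𝒢 : MeasurableSpace Ω} {Y : Ω → ℝ} {ω : Ω} {A : Set Ω}
    (hsub : atomOf 𝒢 ω ⊆ A) {m : ℝ} (hm : ∀ u ∈ A, m ≤ Y u)
    (hD : 0 < ∑ ω', (atomOf 𝒢 ω).indicator Q ω') :
    m ≤ condExpOn Q 𝒢 Y ω := by
  rw [condExpOn, le_div_iff₀ hD, mul_comm, Finset.sum_mul]
  refine Finset.sum_le_sum fun u _ => ?_
  by_cases hu : u ∈ atomOf 𝒢 ω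
  · rw [Set.indicator_of_mem hu, Set.indicator_of_mem hu]
    exact mul_le_mul_of_nonneg_left (hm u (hsub hu)) (hQ u)
  · rw [Set.indicator_of_notMem hu, Set.indicator_of_notMem hu, zero_mul]

lemma bddBelow_condExpOn_image' {𝒬 : Set (Ω → ℝ)} (hprob : ∀ Q ∈ 𝒬, IsProb Q)
    (𝒢 : MeasurableSpace Ω) (X : Ω → ℝ) (ω : Ω) :
    BddBelow ((fun Q => condExpOn Q 𝒢 X ω) '' 𝒬) := by
  haveI : Nonempty Ω := ⟨ω⟩
  refine ⟨min 0 (⨅ u : Ω, X u), ?_⟩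
  rintro s ⟨Q, hQm, rfl⟩
  dsimp only
  have hQ : ∀ u, 0 ≤ Q u := (hprob Q hQm).1
  by_cases hD : ∑ ω', (atomOf 𝒢 ω).indicator Q ω' = 0
  · rw [condExpOn_eq_zero' hD]; exact min_le_left _ _
  · have hDpos : 0 < ∑ ω', (atomOf 𝒢 ω).indicator Q ω' :=
      (mass_nonneg' hQ 𝒢 ω).lt_of_ne' hD
    refine le_trans (min_le_right _ _) ?_
    exact le_condExpOn_of_le' hQ (Set.Subset.refl _)
      (fun u _ => ciInf_le (Set.Finite.bddBelow (Set.finite_range X)) u) hDpos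

end Aux

/-- If a set `𝒬` of probability measures is consistent w.r.t. the
filtration `F`, then the constant sequence `𝒬_t = 𝒬` is dynamically consistent. -/
theorem consistent_implies_dynConsistent {Ω : Type*} [Fintype Ω] (T : ℕ)
    (F : ℕ → MeasurableSpace Ω) (hF : Monotone F) (𝒬 : Set (Ω → ℝ))
    (hprob : ∀ Q ∈ 𝒬, IsProb Q) (hcons : IsConsistent T F 𝒬) :
    DynConsistent T F (fun _ => 𝒬) := by
  intro t ht A hA hAne X ω hω
  haveI : Nonempty A := hAne.to_subtype
  show (⨅ ω' : A, infCE 𝒬 (F (t + 1)) X (ω' : Ω)) ≤ infCE 𝒬 (F t) X ω ∧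
    infCE 𝒬 (F t) X ω ≤ ⨆ ω' : A, infCE 𝒬 (F (t + 1)) X (ω' : Ω)
  rcases Set.eq_empty_or_nonempty 𝒬 with h𝒬 | ⟨Q₀, hQ₀⟩
  · have hz : ∀ (𝒢 : MeasurableSpace Ω) (Z : Ω → ℝ) (u : Ω), infCE 𝒬 𝒢 Z u = 0 := by
      intro 𝒢 Z u
      rw [infCE, h𝒬, Set.image_empty, Real.sInf_empty]
    constructor
    · simp only [hz]
      exact le_of_eq (ciInf_const)
    · simp only [hz]
      exact le_of_eq (ciSup_const (a := (0:ℝ))).symm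
  · set Y : Ω → ℝ := infCE 𝒬 (F (t + 1)) X with hYdef
    have hkey : infCE 𝒬 (F t) X ω = infCE 𝒬 (F t) Y ω := hcons t ht X ω
    have hsub : atomOf (F t) ω ⊆ A := atomOf_subset' hA hω
    have hSne : ((fun Q => condExpOn Q (F t) Y ω) '' 𝒬).Nonempty :=
      ⟨_, ⟨Q₀, hQ₀, rfl⟩⟩
    have hbbY : BddBelow (Set.range fun ω' : A => Y (ω' : Ω)) :=
      Set.Finite.bddBelow (Set.finite_range _)
    have hbaY : BddAbove (Set.range fun ω' : A => Y (ω' : Ω)) :=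
      Set.Finite.bddAbove (Set.finite_range _)
    constructor
    · -- lower bound
      rw [hkey, infCE]
      refine le_csInf hSne ?_
      rintro s ⟨Q, hQm, rfl⟩
      dsimp only
      have hQ : ∀ u, 0 ≤ Q u := (hprob Q hQm).1
      by_cases hD : ∑ ω', (atomOf (F t) ω).indicator Q ω' = 0
      · rw [condExpOn_eq_zero' hD]
        have h1 : (⨅ ω' : A, Y (ω' : Ω)) ≤ Y ω := ciInf_le hbbY ⟨ω, hω⟩
        have hsub2 : atomOf (F (t + 1)) ω ⊆ atomOf (F t) ω :=
          atomOf_mono' (hF (Nat.le_succ t)) ω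
        have h3 : condExpOn Q (F (t + 1)) X ω = 0 :=
          condExpOn_eq_zero' (mass_zero_of_subset' hQ hsub2 hD)
        have h2 : Y ω ≤ 0 := by
          have := csInf_le (bddBelow_condExpOn_image' hprob (F (t + 1)) X ω)
            (Set.mem_image_of_mem _ hQm)
          rw [h3] at this
          exact this
        linarith
      · have hDpos : 0 < ∑ ω', (atomOf (F t) ω).indicator Q ω' :=
          (mass_nonneg' hQ (F t) ω).lt_of_ne' hD
        exact le_condExpOn_of_le' hQ hsub (fun u hu => ciInf_le hbbY ⟨u, hu⟩) hDpos
    · -- upper bound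
      rw [hkey, infCE]
      by_cases hex : ∃ Q ∈ 𝒬, 0 < ∑ ω', (atomOf (F t) ω).indicator Q ω'
      · obtain ⟨Q, hQm, hDpos⟩ := hex
        have hQ : ∀ u, 0 ≤ Q u := (hprob Q hQm).1
        refine le_trans (csInf_le (bddBelow_condExpOn_image' hprob (F t) Y ω)
          (Set.mem_image_of_mem _ hQm)) ?_
        exact condExpOn_le_of_le' hQ hsub (fun u hu => le_ciSup hbaY ⟨u, hu⟩) hDpos
      · push_neg at hex
        have hall : ∀ Q ∈ 𝒬, ∑ ω', (atomOf (F t) ω).indicator Q ω' = 0 := by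
          intro Q hQm
          exact le_antisymm (hex Q hQm) (mass_nonneg' (hprob Q hQm).1 (F t) ω)
        have hYω : Y ω = 0 := by
          have hsub2 : atomOf (F (t + 1)) ω ⊆ atomOf (F t) ω :=
            atomOf_mono' (hF (Nat.le_succ t)) ω
          have hval : ∀ Q ∈ 𝒬, condExpOn Q (F (t + 1)) X ω = 0 := fun Q hQm =>
            condExpOn_eq_zero' (mass_zero_of_subset' (hprob Q hQm).1 hsub2 (hall Q hQm))
          refine le_antisymm ?_ ?_
          · have := csInf_le (bddBelow_condExpOn_image' hprob (F (t + 1)) X ω)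
              (Set.mem_image_of_mem _ hQ₀)
            rw [hval Q₀ hQ₀] at this
            exact this
          · refine le_csInf ⟨_, Set.mem_image_of_mem _ hQ₀⟩ ?_
            rintro b ⟨Q, hQm, rfl⟩
            exact (hval Q hQm).ge
        have h0 : sInf ((fun Q => condExpOn Q (F t) Y ω) '' 𝒬) ≤ 0 := by
          have := csInf_le (bddBelow_condExpOn_image' hprob (F t) Y ω)
            (Set.mem_image_of_mem _ hQ₀)
          rw [condExpOn_eq_zero' (hall Q₀ hQ₀)] at this
          exact this
        refine h0.trans ?_
        rw [← hYω]
        exact le_ciSup hbaY ⟨ω, hω⟩
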